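/- Let n ≥ 1 and let s ≥ 1, j₀ ≥ 1 be such that I = [0, s−1] and J = [j₀, j₀+s−1] are sub-intervals of [0, 2ⁿ−1]. Then there exists a bijection P : I → J such that h(i) ≤ h(P(i)) for every i ∈ I; moreover, if I and J are non-overlapping (i.e. s−1 < j₀), then P can be chosen so that h(i) < h(P(i)) for every i ∈ I. -/

import Mathlib

/-- `h i` is the number of ones in the binary representation of `i`. -/
def h (i : ℕ) : ℕ := (Nat.digits 2 i).sum

lemma h_rec (m : ℕ) : h m = m % 2 + h (m / 2) := by
  rcases Nat.eq_zero_or_pos m with rfl | hm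
  · simp [h]
  · simp [h, Nat.digits_def' (b := 2) one_lt_two hm]

lemma h_pow_add {n x : ℕ} (hx : x < 2 ^ n) : h (2 ^ n + x) = h x + 1 := by
  induction n generalizing x with
  | zero => interval_cases x; simp [h]
  | succ n IH =>
    have h2 : 2 ^ (n + 1) = 2 * 2 ^ n := by ring
    have hmod : (2 ^ (n + 1) + x) % 2 = x % 2 := by omega
    have hdiv : (2 ^ (n + 1) + x) / 2 = 2 ^ n + x / 2 := by omega
    rw [h_rec (2 ^ (n + 1) + x), hmod, hdiv, IH (by omega), h_rec x]
    ring

lemma h_compl {n x : ℕ} (hx : x < 2 ^ n) : h (2 ^ n - 1 - x) + h x = n := by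
  induction n generalizing x with
  | zero => interval_cases x; simp [h]
  | succ n IH =>
    have h2 : 2 ^ (n + 1) = 2 * 2 ^ n := by ring
    have hyd : (2 ^ (n + 1) - 1 - x) / 2 = 2 ^ n - 1 - x / 2 := by omega
    have hym : (2 ^ (n + 1) - 1 - x) % 2 + x % 2 = 1 := by omega
    have hIH := IH (x := x / 2) (by omega)
    rw [h_rec (2 ^ (n + 1) - 1 - x), h_rec x, hyd]
    omega

lemma bijOn_union' {f : ℕ → ℕ} {s₁ s₂ t₁ t₂ : Set ℕ}
    (h₁ : Set.BijOn f s₁ t₁) (h₂ : Set.BijOn f s₂ t₂)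
    (hd : ∀ x ∈ t₁, ∀ y ∈ t₂, x ≠ y) :
    Set.BijOn f (s₁ ∪ s₂) (t₁ ∪ t₂) := by
  refine ⟨fun x hx => ?_, fun x hx y hy hxy => ?_, fun y hy => ?_⟩
  · rcases hx with hx | hx
    · exact Or.inl (h₁.mapsTo hx)
    · exact Or.inr (h₂.mapsTo hx)
  · rcases hx with hx | hx <;> rcases hy with hy | hy
    · exact h₁.injOn hx hy hxy
    · exact absurd hxy (hd _ (h₁.mapsTo hx) _ (h₂.mapsTo hy))
    · exact absurd hxy.symm (hd _ (h₁.mapsTo hy) _ (h₂.mapsTo hx))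
    · exact h₂.injOn hx hy hxy
  · rcases hy with hy | hy
    · obtain ⟨x, hx, rfl⟩ := h₁.surjOn hy
      exact ⟨x, Or.inl hx, rfl⟩
    · obtain ⟨x, hx, rfl⟩ := h₂.surjOn hy
      exact ⟨x, Or.inr hx, rfl⟩

lemma bijOn_add_left (c p q : ℕ) :
    Set.BijOn (fun x => c + x) (Set.Ico p q) (Set.Ico (c + p) (c + q)) := by
  refine ⟨fun x hx => ?_, fun x hx y hy hxy => ?_, fun y hy => ?_⟩
  · simp only [Set.mem_Ico] at *; omega
  · simp only at hxy; omega
  · simp only [Set.mem_Ico] at hy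
    exact ⟨y - c, by simp only [Set.mem_Ico]; omega, by simp only; omega⟩

lemma bijOn_compl (H p q : ℕ) (hpq : p ≤ q) (hq : q ≤ H) :
    Set.BijOn (fun x => H - 1 - x) (Set.Ico p q) (Set.Ico (H - q) (H - p)) := by
  refine ⟨fun x hx => ?_, fun x hx y hy hxy => ?_, fun y hy => ?_⟩
  · simp only [Set.mem_Ico] at *; omega
  · simp only [Set.mem_Ico] at hx hy
    simp only at hxy; omega
  · simp only [Set.mem_Ico] at hy
    exact ⟨H - 1 - y, by simp only [Set.mem_Ico]; omega, by simp only; omega⟩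

lemma bijOn_inverse {f : ℕ → ℕ} {s t : Set ℕ} (hf : Set.BijOn f s t) :
    ∃ g : ℕ → ℕ, Set.BijOn g t s ∧ ∀ y ∈ t, f (g y) = y := by
  classical
  refine ⟨Function.invFunOn f s, ?_, fun y hy => hf.invOn_invFunOn.2 hy⟩
  refine hf.invOn_invFunOn.symm.bijOn ?_ hf.mapsTo
  intro y hy
  obtain ⟨x, hx, hfx⟩ := hf.surjOn hy
  exact Function.invFunOn_mem ⟨x, hx, hfx⟩

lemma grahamL : ∀ n s j₀ : ℕ, 1 ≤ s → j₀ + s ≤ 2 ^ n →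
    ∃ P : ℕ → ℕ, Set.BijOn P (Set.Ico 0 s) (Set.Ico j₀ (j₀ + s)) ∧
      (∀ i ∈ Set.Ico 0 s, h i ≤ h (P i)) ∧
      (s ≤ j₀ → ∀ i ∈ Set.Ico 0 s, h i < h (P i)) := by
  intro n
  induction n with
  | zero =>
    intro s j₀ hs hJ
    have hs1 : s = 1 := by simpa using hJ |> fun _ => by omega
    have hj0 : j₀ = 0 := by omega
    subst hs1; subst hj0
    refine ⟨id, by simpa using Set.bijOn_id (Set.Ico 0 1), fun i _ => le_refl _, fun hc => by omega⟩
  | succ n IH =>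
    intro s j₀ hs hJ
    have hH : 0 < 2 ^ n := Nat.pow_pos (by norm_num)
    have h2 : 2 ^ (n + 1) = 2 * 2 ^ n := by ring
    -- dual lemma: map any interval onto the top interval of [0, 2^n)
    have Un : ∀ a c : ℕ, 1 ≤ a → c + a ≤ 2 ^ n →
        ∃ Q : ℕ → ℕ, Set.BijOn Q (Set.Ico c (c + a)) (Set.Ico (2 ^ n - a) (2 ^ n)) ∧
          (∀ j ∈ Set.Ico c (c + a), h j ≤ h (Q j)) ∧
          (c + a ≤ 2 ^ n - a → ∀ j ∈ Set.Ico c (c + a), h j < h (Q j)) := by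
      intro a c ha hca
      obtain ⟨P, hPbij, hPle, hPlt⟩ := IH a (2 ^ n - c - a) ha (by omega)
      obtain ⟨g, hgbij, hgP⟩ := bijOn_inverse hPbij
      rw [show 2 ^ n - c - a + a = 2 ^ n - c by omega] at hgbij hgP hPbij
      have hmem : ∀ j, c ≤ j → j < c + a → 2 ^ n - 1 - j ∈ Set.Ico (2 ^ n - c - a) (2 ^ n - c) := by
        intro j hj1 hj2; simp only [Set.mem_Ico]; omega
      have key : ∀ j, c ≤ j → j < c + a →
          (h j ≤ h (2 ^ n - 1 - g (2 ^ n - 1 - j)) ∧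
           (h (g (2 ^ n - 1 - j)) < h (2 ^ n - 1 - j) →
             h j < h (2 ^ n - 1 - g (2 ^ n - 1 - j)))) := by
        intro j hj1 hj2
        have hx := hmem j hj1 hj2
        have hgx := hgbij.mapsTo hx
        simp only [Set.mem_Ico] at hgx
        have hgle : h (g (2 ^ n - 1 - j)) ≤ h (2 ^ n - 1 - j) := by
          have := hPle (g (2 ^ n - 1 - j)) (by simp only [Set.mem_Ico]; omega)
          rwa [hgP _ hx] at this
        have c1 : h (2 ^ n - 1 - (2 ^ n - 1 - j)) + h (2 ^ n - 1 - j) = n :=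
          h_compl (by omega)
        have c2 : h (2 ^ n - 1 - g (2 ^ n - 1 - j)) + h (g (2 ^ n - 1 - j)) = n :=
          h_compl (by omega)
        rw [show 2 ^ n - 1 - (2 ^ n - 1 - j) = j by omega] at c1
        constructor
        · omega
        · intro hlt; omega
      refine ⟨(fun x => 2 ^ n - 1 - x) ∘ g ∘ (fun x => 2 ^ n - 1 - x), ?_, ?_, ?_⟩
      · have b1 : Set.BijOn (fun x => 2 ^ n - 1 - x) (Set.Ico c (c + a))
            (Set.Ico (2 ^ n - c - a) (2 ^ n - c)) := by
          have := bijOn_compl (2 ^ n) c (c + a) (by omega) hca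
          rwa [show 2 ^ n - (c + a) = 2 ^ n - c - a by omega] at this
        have b3 : Set.BijOn (fun x => 2 ^ n - 1 - x) (Set.Ico 0 a)
            (Set.Ico (2 ^ n - a) (2 ^ n)) := by
          have := bijOn_compl (2 ^ n) 0 a (by omega) (by omega)
          rwa [show 2 ^ n - 0 = 2 ^ n by omega] at this
        exact b3.comp (hgbij.comp b1)
      · intro j hj
        simp only [Set.mem_Ico] at hj
        exact (key j hj.1 hj.2).1
      · intro hdisj j hj
        simp only [Set.mem_Ico] at hj
        have hx := hmem j hj.1 hj.2
        refine (key j hj.1 hj.2).2 ?_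
        have := hPlt (by omega) (g (2 ^ n - 1 - j)) ?_
        · rwa [hgP _ hx] at this
        · have hgx := hgbij.mapsTo hx
          simp only [Set.mem_Ico] at hgx
          simp only [Set.mem_Ico]; omega
    -- main case split
    by_cases hj0 : j₀ = 0
    · subst hj0
      refine ⟨id, by simpa using Set.bijOn_id (Set.Ico 0 s), fun i _ => le_refl _,
        fun hc => by omega⟩
    rcases le_or_gt (j₀ + s) (2 ^ n) with hA | hC1
    · exact IH s j₀ hs hA
    rcases le_or_gt (2 ^ n) j₀ with hB | hC2
    · -- J entirely in upper half
      obtain ⟨P, hPbij, hPle, _⟩ := IH s (j₀ - 2 ^ n) hs (by omega)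
      have hlt : ∀ i ∈ Set.Ico 0 s, h i < h (2 ^ n + P i) := by
        intro i hi
        have h1 := hPle i hi
        have hPi := hPbij.mapsTo hi
        simp only [Set.mem_Ico] at hPi
        have := h_pow_add (n := n) (x := P i) (by omega)
        omega
      refine ⟨(fun x => 2 ^ n + x) ∘ P, ?_, fun i hi => le_of_lt (hlt i hi),
        fun _ => hlt⟩
      have b := (bijOn_add_left (2 ^ n) (j₀ - 2 ^ n) (j₀ - 2 ^ n + s)).comp hPbij
      rwa [show 2 ^ n + (j₀ - 2 ^ n) = j₀ by omega,
        show 2 ^ n + (j₀ - 2 ^ n + s) = j₀ + s by omega] at b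
    · -- straddle case : j₀ < 2^n < j₀ + s
      rcases le_or_gt s (2 ^ n) with hsH | hsH
      · -- s ≤ 2^n
        obtain ⟨Q, hQbij, hQle, hQlt⟩ := Un (2 ^ n - j₀) (j₀ + s - 2 ^ n) (by omega) (by omega)
        rw [show j₀ + s - 2 ^ n + (2 ^ n - j₀) = s by omega] at hQbij hQle hQlt
        rw [show 2 ^ n - (2 ^ n - j₀) = j₀ by omega] at hQbij hQlt
        set b := j₀ + s - 2 ^ n with hb
        refine ⟨fun i => if i < b then 2 ^ n + i else Q i, ?_, ?_, ?_⟩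
        · have p1 : Set.BijOn (fun i => if i < b then 2 ^ n + i else Q i)
              (Set.Ico 0 b) (Set.Ico (2 ^ n) (j₀ + s)) := by
            have := bijOn_add_left (2 ^ n) 0 b
            rw [show 2 ^ n + 0 = 2 ^ n by omega, show 2 ^ n + b = j₀ + s by omega] at this
            refine this.congr fun x hx => ?_
            simp only [Set.mem_Ico] at hx
            simp [hx.2]
          have p2 : Set.BijOn (fun i => if i < b then 2 ^ n + i else Q i)
              (Set.Ico b s) (Set.Ico j₀ (2 ^ n)) := by
            refine hQbij.congr fun x hx => ?_
            simp only [Set.mem_Ico] at hx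
            simp [show ¬ x < b by omega]
          have u := bijOn_union' p1 p2 (by
            intro x hx y hy
            simp only [Set.mem_Ico] at hx hy
            omega)
          rwa [Set.Ico_union_Ico_eq_Ico (by omega) (by omega), Set.union_comm,
            Set.Ico_union_Ico_eq_Ico (by omega) (by omega)] at u
        · intro i hi
          simp only [Set.mem_Ico] at hi
          by_cases hib : i < b
          · simp only [hib, if_pos]
            have := h_pow_add (n := n) (x := i) (by omega)
            omega
          · simp only [hib, if_neg, not_false_iff]
            exact hQle i (by simp only [Set.mem_Ico]; omega)
        · intro hdisj i hi
          simp only [Set.mem_Ico] at hi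
          by_cases hib : i < b
          · simp only [hib, if_pos]
            have := h_pow_add (n := n) (x := i) (by omega)
            omega
          · simp only [hib, if_neg, not_false_iff]
            exact hQlt (by omega) i (by simp only [Set.mem_Ico]; omega)
      · -- 2^n < s ; strict case impossible
        obtain ⟨R, hRbij, hRle, _⟩ := IH j₀ (s - 2 ^ n) (by omega) (by omega)
        refine ⟨fun i => if i < j₀ then 2 ^ n + R i else i, ?_, ?_, fun hc => by omega⟩
        · have p1 : Set.BijOn (fun i => if i < j₀ then 2 ^ n + R i else i)
              (Set.Ico 0 j₀) (Set.Ico s (j₀ + s)) := by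
            have b := (bijOn_add_left (2 ^ n) (s - 2 ^ n) (s - 2 ^ n + j₀)).comp hRbij
            rw [show 2 ^ n + (s - 2 ^ n) = s by omega,
              show 2 ^ n + (s - 2 ^ n + j₀) = j₀ + s by omega] at b
            refine b.congr fun x hx => ?_
            simp only [Set.mem_Ico] at hx
            simp [hx.2, Function.comp]
          have p2 : Set.BijOn (fun i => if i < j₀ then 2 ^ n + R i else i)
              (Set.Ico j₀ s) (Set.Ico j₀ s) := by
            refine (Set.bijOn_id (Set.Ico j₀ s)).congr fun x hx => ?_
            simp only [Set.mem_Ico] at hx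
            simp [show ¬ x < j₀ by omega]
          have u := bijOn_union' p1 p2 (by
            intro x hx y hy
            simp only [Set.mem_Ico] at hx hy
            omega)
          rwa [Set.Ico_union_Ico_eq_Ico (by omega) (by omega), Set.union_comm,
            Set.Ico_union_Ico_eq_Ico (by omega) (by omega)] at u
        · intro i hi
          simp only [Set.mem_Ico] at hi
          by_cases hij : i < j₀
          · simp only [hij, if_pos]
            have h1 := hRle i (by simp only [Set.mem_Ico]; omega)
            have hRi := hRbij.mapsTo (by simp only [Set.mem_Ico]; omega : i ∈ Set.Ico 0 j₀)
            simp only [Set.mem_Ico] at hRi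
            have := h_pow_add (n := n) (x := R i) (by omega)
            omega
          · simp [hij]


/-- Graham's lemma: for `I = [0, s-1]` and `J = [j₀, j₀+s-1]` sub-intervals of
`[0, 2^n - 1]`, there is a bijection `P : I → J` with `h i ≤ h (P i)` for all `i ∈ I`,
which is strict whenever `I` and `J` are non-overlapping (i.e. `s - 1 < j₀`). -/
theorem graham_special_bijection (n s j₀ : ℕ) (hn : 1 ≤ n) (hs : 1 ≤ s) (hj₀ : 1 ≤ j₀)
    (hI : s ≤ 2 ^ n) (hJ : j₀ + s ≤ 2 ^ n) :
    ∃ P : ℕ → ℕ, Set.BijOn P (Set.Ico 0 s) (Set.Ico j₀ (j₀ + s)) ∧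
      (∀ i ∈ Set.Ico 0 s, h i ≤ h (P i)) ∧
      (s ≤ j₀ → ∀ i ∈ Set.Ico 0 s, h i < h (P i)) :=
  grahamL n s j₀ hs hJ
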